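/- There exist Waterman sequences A = (a_n) and B = (b_n) with B proper such that ∑_{k=1}^n b_k = o(∑_{k=1}^n a_k) (i.e. lim_{n→∞} (∑_{k=1}^n b_k)/(∑_{k=1}^n a_k) = 0), while b_n = o(a_n) fails, i.e. b_n/a_n does not tend to 0. -/

import Mathlib

open Filter Set
open scoped ENNReal

/-- A Waterman sequence: a nonincreasing sequence of positive reals whose series diverges. -/
def IsWaterman (a : ℕ → ℝ) : Prop :=
  Antitone a ∧ (∀ n, 0 < a n) ∧ ¬ Summable a

/-- A Waterman sequence is proper if it moreover tends to zero. -/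
def IsProperWaterman (a : ℕ → ℝ) : Prop :=
  IsWaterman a ∧ Tendsto a atTop (nhds 0)

/-- An admissible sequence of nonoverlapping closed subintervals `[s n, t n]` of `[0,1]`:
the intervals are contained in `[0,1]` and have pairwise disjoint interiors. -/
def Nonoverlapping (s t : ℕ → ℝ) : Prop :=
  (∀ n, 0 ≤ s n ∧ s n ≤ t n ∧ t n ≤ 1) ∧
  Pairwise fun m n => Disjoint (Set.Ioo (s m) (t m)) (Set.Ioo (s n) (t n))

/-- The `A`-variation (in the sense of Waterman) of `x` on `[0,1]`, with values in `[0,∞]`. -/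
noncomputable def eVar (a : ℕ → ℝ) (x : ℝ → ℝ) : ℝ≥0∞ :=
  ⨆ p : {p : (ℕ → ℝ) × (ℕ → ℝ) // Nonoverlapping p.1 p.2},
    ∑' n, ENNReal.ofReal (a n * |x (p.1.2 n) - x (p.1.1 n)|)

/-- Membership in the space `ABV` of functions of bounded `A`-variation. -/
def MemABV (a : ℕ → ℝ) (x : ℝ → ℝ) : Prop := eVar a x < ⊤

/-- The norm `‖x‖_{ABV} = |x(0)| + var_A(x)`, with values in `[0,∞]`. -/
noncomputable def eNormABV (a : ℕ → ℝ) (x : ℝ → ℝ) : ℝ≥0∞ :=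
  ENNReal.ofReal |x 0| + eVar a x

/-- The supremum norm of `x` on `[0,1]`, with values in `[0,∞]`. -/
noncomputable def eSupNorm (x : ℝ → ℝ) : ℝ≥0∞ :=
  ⨆ t ∈ Set.Icc (0 : ℝ) 1, ENNReal.ofReal |x t|

/-- `x` is bounded on `[0,1]`. -/
def BoundedOn01 (x : ℝ → ℝ) : Prop := ∃ C : ℝ, ∀ t ∈ Set.Icc (0 : ℝ) 1, |x t| ≤ C

/-- `K` is relatively compact with respect to the supremum norm on `[0,1]`: every sequence
in `K` has a subsequence converging in the supremum norm to some bounded function. -/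
def RelCompSup (K : Set (ℝ → ℝ)) : Prop :=
  ∀ u : ℕ → ℝ → ℝ, (∀ j, u j ∈ K) →
    ∃ φ : ℕ → ℕ, StrictMono φ ∧ ∃ x : ℝ → ℝ, BoundedOn01 x ∧
      Tendsto (fun k => eSupNorm (u (φ k) - x)) atTop (nhds 0)

/-- `K` is relatively compact in the norm of the space `BBV` (for the sequence `b`):
every sequence in `K` has a subsequence converging in `‖·‖_{BBV}` to an element of `BBV`. -/
def RelCompABV (b : ℕ → ℝ) (K : Set (ℝ → ℝ)) : Prop :=
  ∀ u : ℕ → ℝ → ℝ, (∀ j, u j ∈ K) →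
    ∃ φ : ℕ → ℕ, StrictMono φ ∧ ∃ x : ℝ → ℝ, MemABV b x ∧
      Tendsto (fun k => eNormABV b (u (φ k) - x)) atTop (nhds 0)

/-- `K` is a bounded subset of `ABV`. -/
def BddInABV (a : ℕ → ℝ) (K : Set (ℝ → ℝ)) : Prop :=
  ∃ M : ℝ≥0∞, M < ⊤ ∧ ∀ x ∈ K, eNormABV a x ≤ M

/-- `∑_{k=1}^n b_k = o(∑_{k=1}^n a_k)`. -/
def PartialSumsLittleO (a b : ℕ → ℝ) : Prop :=
  Tendsto (fun n => (∑ k ∈ Finset.range n, b k) / (∑ k ∈ Finset.range n, a k))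
    atTop (nhds 0)

/-- Condition (b): for every `ε > 0` there is `k₀` such that for every nonincreasing
nonnegative sequence `c` tending to `0` with `∑ aₙcₙ < ∞` one has
`∑_{n>k₀} bₙcₙ ≤ ε ∑ₙ aₙcₙ`. -/
def SmallTailCond (a b : ℕ → ℝ) : Prop :=
  ∀ ε : ℝ, 0 < ε → ∃ k₀ : ℕ, ∀ c : ℕ → ℝ,
    (∀ n, 0 ≤ c n) → Antitone c → Tendsto c atTop (nhds 0) →
    (∑' n, ENNReal.ofReal (a n * c n)) < ⊤ →
    (∑' n, ENNReal.ofReal (b (n + k₀) * c (n + k₀))) ≤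
      ENNReal.ofReal ε * ∑' n, ENNReal.ofReal (a n * c n)

/-- The compact-embedding property from `ABV` into `BBV`: every bounded subset of `ABV`
which is relatively compact in the supremum norm is contained in `BBV` and relatively
compact there. -/
def CompactEmbeddingABV (a b : ℕ → ℝ) : Prop :=
  ∀ K : Set (ℝ → ℝ), (∀ x ∈ K, MemABV a x) → BddInABV a K → RelCompSup K →
    (∀ x ∈ K, MemABV b x) ∧ RelCompABV b K

/-- The summable ideal `I_A = {C ⊆ ℕ : ∑_{n ∈ C} a_n < ∞}` (as a family of sets;
it may equal `P(ℕ)` when `∑ a_n < ∞`). -/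
def IdealOf (a : ℕ → ℝ) : Set (Set ℕ) := {C : Set ℕ | Summable fun n : C => a n}

/-- The Katětov order on families of subsets of `ℕ`. -/
def KatetovLE (I J : Set (Set ℕ)) : Prop :=
  ∃ f : ℕ → ℕ, ∀ C ∈ I, f ⁻¹' C ∈ J

/-- Given a sequence `b` and an increasing sequence `m` of naturals, the sequence `b^M`,
whose `n`-th term is `k·bₙ` where `k` is the number of indices `j` with `m j ≤ n`
(and `bₙ` itself if `n` is below all of `m`). -/
def seqM (b : ℕ → ℝ) (m : ℕ → ℕ) (n : ℕ) : ℝ :=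
  ((max 1 (((Finset.range (n + 1)).filter fun j => m j ≤ n).card) : ℕ) : ℝ) * b n

/-- An admissible `n`-tuple of nonoverlapping closed subintervals of `[0,1]`. -/
def NonoverlappingFin {n : ℕ} (s t : Fin n → ℝ) : Prop :=
  (∀ i, 0 ≤ s i ∧ s i ≤ t i ∧ t i ≤ 1) ∧
  Pairwise fun i j => Disjoint (Set.Ioo (s i) (t i)) (Set.Ioo (s j) (t j))

/-- The modulus of variation of Chanturia: `v(x,n)` is the supremum of `∑_{k=1}^n |x(I_k)|`
over all `n`-tuples of nonoverlapping closed subintervals of `[0,1]`. -/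
noncomputable def modVar (x : ℝ → ℝ) (n : ℕ) : ℝ≥0∞ :=
  ⨆ p : {p : (Fin n → ℝ) × (Fin n → ℝ) // NonoverlappingFin p.1 p.2},
    ENNReal.ofReal (∑ i, |x (p.1.2 i) - x (p.1.1 i)|)

/-- Membership in the Chanturia class `V[g(n)]`: `x` is bounded and `v(x,n) = O(g(n))`. -/
def MemChanturia (g : ℕ → ℝ) (x : ℝ → ℝ) : Prop :=
  BoundedOn01 x ∧ ∃ η : ℝ, 0 < η ∧ ∀ n, modVar x n ≤ ENNReal.ofReal (η * g n)

/-- The norm `‖x‖_{φ_g} = |x(0)| + sup_n v(x,n)/g(n)` of the Chanturia class. -/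
noncomputable def eNormChan (g : ℕ → ℝ) (x : ℝ → ℝ) : ℝ≥0∞ :=
  ENNReal.ofReal |x 0| + ⨆ n, modVar x n / ENNReal.ofReal (g n)

/-- The family `𝒢`: positive, nondecreasing `g` tending to `∞` with `n/g(n)`
nondecreasing and tending to `∞`. -/
def MemG (g : ℕ → ℝ) : Prop :=
  (∀ n, 0 < g n) ∧ Monotone g ∧ Tendsto g atTop atTop ∧
  Monotone (fun n : ℕ => (n : ℝ) / g n) ∧ Tendsto (fun n : ℕ => (n : ℝ) / g n) atTop atTop

/-- `K` is a bounded subset of the Chanturia class `V[g(n)]`. -/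
def BddInChan (g : ℕ → ℝ) (K : Set (ℝ → ℝ)) : Prop :=
  ∃ M : ℝ≥0∞, M < ⊤ ∧ ∀ x ∈ K, eNormChan g x ≤ M

/-- `K` is relatively compact in the norm of the Chanturia class `V[h(n)]`. -/
def RelCompChan (h : ℕ → ℝ) (K : Set (ℝ → ℝ)) : Prop :=
  ∀ u : ℕ → ℝ → ℝ, (∀ j, u j ∈ K) →
    ∃ φ : ℕ → ℕ, StrictMono φ ∧ ∃ x : ℝ → ℝ, MemChanturia h x ∧
      Tendsto (fun k => eNormChan h (u (φ k) - x)) atTop (nhds 0)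

/-- The compact-embedding property from `V[g(n)]` into `V[h(n)]`. -/
def CompactEmbeddingChan (g h : ℕ → ℝ) : Prop :=
  ∀ K : Set (ℝ → ℝ), (∀ x ∈ K, MemChanturia g x) → BddInChan g K → RelCompSup K →
    (∀ x ∈ K, MemChanturia h x) ∧ RelCompChan h K

/-- The submeasure `φ_g(C) = sup_n |C ∩ {0,…,n}| / g(n)`, with values in `[0,∞]`. -/
noncomputable def phiSub (g : ℕ → ℝ) (C : Set ℕ) : ℝ≥0∞ :=
  ⨆ n, ENNReal.ofReal (((C ∩ Set.Iic n).ncard : ℝ) / g n)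

/-- The exhaustive ideal `Exh(φ_g)`. -/
def Exh (g : ℕ → ℝ) : Set (Set ℕ) :=
  {C : Set ℕ | Tendsto (fun k => phiSub g (C \ Set.Iic k)) atTop (nhds 0)}

/-- The characteristic function of `[0,t]`. -/
noncomputable def chi (t : ℝ) : ℝ → ℝ := Set.indicator (Set.Icc 0 t) fun _ => 1

noncomputable def wA (n : ℕ) : ℝ := (1/2 : ℝ) ^ (Nat.log 2 (n+1))
noncomputable def wB (n : ℕ) : ℝ := (1/2 : ℝ) ^ (2 ^ (Nat.clog 2 (Nat.log 2 (n+1))))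

lemma wA_pos (n : ℕ) : 0 < wA n := by unfold wA; positivity
lemma wB_pos (n : ℕ) : 0 < wB n := by unfold wB; positivity

lemma wB_le_wA (n : ℕ) : wB n ≤ wA n := by
  apply pow_le_pow_of_le_one (by norm_num) (by norm_num)
  exact Nat.le_pow_clog one_lt_two _

lemma wA_anti : Antitone wA := by
  intro m n h
  apply pow_le_pow_of_le_one (by norm_num) (by norm_num)
  exact Nat.log_mono_right (by omega)

lemma wB_anti : Antitone wB := by
  intro m n h
  apply pow_le_pow_of_le_one (by norm_num) (by norm_num)
  exact Nat.pow_le_pow_right (by norm_num)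
    (Nat.clog_mono_right _ (Nat.log_mono_right (by omega)))

lemma log_tendsto : Tendsto (Nat.log 2) atTop atTop :=
  tendsto_atTop_atTop_of_monotone (Nat.log_monotone)
    (fun b => ⟨2^b, by simp [Nat.log_pow]⟩)

lemma wA_tendsto : Tendsto wA atTop (nhds 0) := by
  have h1 : Tendsto (fun n : ℕ => Nat.log 2 (n+1)) atTop atTop :=
    log_tendsto.comp (tendsto_add_atTop_nat 1)
  have h2 : Tendsto (fun k : ℕ => (1/2 : ℝ) ^ k) atTop (nhds 0) :=
    tendsto_pow_atTop_nhds_zero_of_lt_one (by norm_num) (by norm_num)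
  exact h2.comp h1

lemma wB_tendsto : Tendsto wB atTop (nhds 0) := by
  apply squeeze_zero (fun n => (wB_pos n).le) wB_le_wA wA_tendsto

lemma log_block {l k : ℕ} (h1 : 2^l - 1 ≤ k) (h2 : k < 2^(l+1) - 1) :
    Nat.log 2 (k+1) = l := by
  have hp : 1 ≤ 2^l := Nat.one_le_two_pow
  exact Nat.log_eq_of_pow_le_of_lt_pow (by omega) (by omega)

lemma blockA (l : ℕ) :
    ∑ k ∈ Finset.Ico (2^l - 1) (2^(l+1) - 1), wA k = 1 := by
  have hc : ∀ k ∈ Finset.Ico (2^l - 1) (2^(l+1) - 1), wA k = (1/2 : ℝ)^l := by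
    intro k hk
    rw [Finset.mem_Ico] at hk
    unfold wA
    rw [log_block hk.1 hk.2]
  rw [Finset.sum_congr rfl hc, Finset.sum_const]
  have hp : 1 ≤ 2^l := Nat.one_le_two_pow
  have hcard : (2^(l+1) - 1) - (2^l - 1) = 2^l := by
    have : 2^(l+1) = 2 * 2^l := by ring
    omega
  rw [Nat.card_Ico, hcard, nsmul_eq_mul]
  push_cast
  rw [one_div, inv_pow]
  exact mul_inv_cancel₀ (by positivity)

lemma Ta_eq (l : ℕ) : ∑ k ∈ Finset.range (2^l - 1), wA k = l := by
  induction l with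
  | zero => simp
  | succ l ih =>
    have hp : 1 ≤ 2^l := Nat.one_le_two_pow
    have h1 : 2^l - 1 ≤ 2^(l+1) - 1 := by
      have : 2^(l+1) = 2 * 2^l := by ring
      omega
    rw [Finset.range_eq_Ico] at ih ⊢
    rw [← Finset.sum_Ico_consecutive _ (Nat.zero_le _) h1, ih, blockA]
    push_cast; ring

lemma blockB (m : ℕ) :
    ∑ k ∈ Finset.Ico (2^(2^m) - 1) (2^(2^m+1) - 1), wB k = 1 := by
  have hc : ∀ k ∈ Finset.Ico (2^(2^m) - 1) (2^(2^m+1) - 1), wB k = (1/2 : ℝ)^(2^m) := by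
    intro k hk
    rw [Finset.mem_Ico] at hk
    unfold wB
    rw [log_block hk.1 hk.2, Nat.clog_pow 2 m one_lt_two]
  rw [Finset.sum_congr rfl hc, Finset.sum_const]
  have hp : 1 ≤ 2^(2^m) := Nat.one_le_two_pow
  have hcard : (2^(2^m+1) - 1) - (2^(2^m) - 1) = 2^(2^m) := by
    have : 2^(2^m+1) = 2 * 2^(2^m) := by ring
    omega
  rw [Nat.card_Ico, hcard, nsmul_eq_mul]
  push_cast
  rw [one_div, inv_pow]
  exact mul_inv_cancel₀ (by positivity)

lemma wB_not_summable : ¬ Summable wB := by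
  intro hs
  have hc : CauchySeq (fun n => ∑ k ∈ Finset.range n, wB k) :=
    hs.hasSum.tendsto_sum_nat.cauchySeq
  rw [Metric.cauchySeq_iff'] at hc
  obtain ⟨N, hN⟩ := hc (1/2) (by norm_num)
  set q := 2^(2^N) - 1 with hq
  set p := 2^(2^N+1) - 1 with hp
  have hNq : N ≤ q := by
    have h1 : N < 2^N := Nat.lt_two_pow_self
    have h2 : 2^N ≤ 2^(2^N) := Nat.pow_le_pow_right (by norm_num) h1.le
    omega
  have hqp : q ≤ p := by
    have : 2^(2^N+1) = 2 * 2^(2^N) := by ring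
    have h1 : 1 ≤ 2^(2^N) := Nat.one_le_two_pow
    omega
  have d1 := hN p (hNq.trans hqp)
  have d2 := hN q hNq
  have hdiff : (∑ k ∈ Finset.range p, wB k) - (∑ k ∈ Finset.range q, wB k) = 1 := by
    rw [← Finset.sum_Ico_eq_sub _ hqp]
    exact blockB N
  have := dist_triangle (∑ k ∈ Finset.range p, wB k)
    (∑ k ∈ Finset.range N, wB k) (∑ k ∈ Finset.range q, wB k)
  rw [dist_comm (∑ k ∈ Finset.range N, wB k)] at this
  have : dist (∑ k ∈ Finset.range p, wB k) (∑ k ∈ Finset.range q, wB k) < 1 := by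
    calc dist (∑ k ∈ Finset.range p, wB k) (∑ k ∈ Finset.range q, wB k)
        ≤ _ + _ := this
      _ < 1/2 + 1/2 := add_lt_add d1 d2
      _ = 1 := by norm_num
  rw [Real.dist_eq, hdiff] at this
  norm_num at this

lemma Ta_ge (n : ℕ) (hn : 1 ≤ n) :
    (Nat.log 2 n : ℝ) ≤ ∑ k ∈ Finset.range n, wA k := by
  have h1 : 2 ^ (Nat.log 2 n) ≤ n := Nat.pow_log_le_self 2 (by omega)
  have h2 : 2 ^ (Nat.log 2 n) - 1 ≤ n := by omega
  calc (Nat.log 2 n : ℝ) = ∑ k ∈ Finset.range (2 ^ (Nat.log 2 n) - 1), wA k :=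
        (Ta_eq _).symm
    _ ≤ ∑ k ∈ Finset.range n, wA k := by
        apply Finset.sum_le_sum_of_subset_of_nonneg
        · exact Finset.range_subset_range.mpr h2
        · exact fun k _ _ => (wA_pos k).le

lemma Tb_le (n : ℕ) (hn : 1 ≤ n) :
    ∑ k ∈ Finset.range n, wB k ≤ 2 * (Nat.clog 2 (Nat.log 2 n) + 1) := by
  set M := Nat.clog 2 (Nat.log 2 n) with hM
  have hmaps : ∀ k ∈ Finset.range n,
      Nat.clog 2 (Nat.log 2 (k+1)) ∈ Finset.range (M+1) := by
    intro k hk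
    rw [Finset.mem_range] at hk ⊢
    have : Nat.log 2 (k+1) ≤ Nat.log 2 n := Nat.log_mono_right (by omega)
    have := Nat.clog_mono_right 2 this
    omega
  rw [← Finset.sum_fiberwise_of_maps_to hmaps wB]
  have hfib : ∀ m ∈ Finset.range (M+1),
      ∑ k ∈ (Finset.range n).filter (fun k => Nat.clog 2 (Nat.log 2 (k+1)) = m),
        wB k ≤ 2 := by
    intro m _
    have hsub : (Finset.range n).filter (fun k => Nat.clog 2 (Nat.log 2 (k+1)) = m)
        ⊆ Finset.range (2^(2^m + 1) - 1) := by
      intro k hk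
      rw [Finset.mem_filter] at hk
      rw [Finset.mem_range]
      have h1 : Nat.log 2 (k+1) ≤ 2^m := by
        have := Nat.le_pow_clog one_lt_two (Nat.log 2 (k+1))
        rw [hk.2] at this; exact this
      have h2 : k+1 < 2^(Nat.log 2 (k+1) + 1) := Nat.lt_pow_succ_log_self one_lt_two _
      have h3 : 2^(Nat.log 2 (k+1) + 1) ≤ 2^(2^m + 1) :=
        Nat.pow_le_pow_right (by norm_num) (by omega)
      omega
    have hval : ∀ k ∈ (Finset.range n).filter
        (fun k => Nat.clog 2 (Nat.log 2 (k+1)) = m), wB k = (1/2 : ℝ)^(2^m) := by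
      intro k hk
      rw [Finset.mem_filter] at hk
      unfold wB
      rw [hk.2]
    rw [Finset.sum_congr rfl hval, Finset.sum_const, nsmul_eq_mul]
    calc ((Finset.range n).filter
          (fun k => Nat.clog 2 (Nat.log 2 (k+1)) = m)).card * (1/2 : ℝ)^(2^m)
        ≤ (2^(2^m + 1) : ℝ) * (1/2)^(2^m) := by
          apply mul_le_mul_of_nonneg_right _ (by positivity)
          have h := Finset.card_le_card hsub
          rw [Finset.card_range] at h
          exact_mod_cast le_trans h (Nat.sub_le _ _)
      _ = 2 := by
          rw [pow_succ, one_div, inv_pow]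
          rw [mul_comm ((2:ℝ)^(2^m)) 2, mul_assoc]
          rw [mul_inv_cancel₀ (by positivity)]
          ring
  calc ∑ m ∈ Finset.range (M+1), ∑ k ∈ (Finset.range n).filter
        (fun k => Nat.clog 2 (Nat.log 2 (k+1)) = m), wB k
      ≤ ∑ m ∈ Finset.range (M+1), (2:ℝ) := Finset.sum_le_sum hfib
    _ = 2 * (M+1) := by
        rw [Finset.sum_const, Finset.card_range, nsmul_eq_mul]; push_cast; ring

lemma sq_le_two_pow {k : ℕ} (h : 4 ≤ k) : k^2 ≤ 2^k := by
  have H : ∀ k, 4 ≤ k → k^2 ≤ 2^k ∧ 2*k+1 ≤ 2^k := by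
    intro k hk
    induction k, hk using Nat.le_induction with
    | base => norm_num
    | succ k hk ih =>
      obtain ⟨i1, i2⟩ := ih
      have h2 : k < 2^k := Nat.lt_two_pow_self
      constructor
      · calc (k+1)^2 = k^2 + (2*k+1) := by ring
          _ ≤ 2^k + 2^k := by omega
          _ = 2^(k+1) := by ring
      · calc 2*(k+1)+1 = (2*k+1) + 2 := by ring
          _ ≤ 2^k + 2^k := by omega
          _ = 2^(k+1) := by ring
  exact (H k h).1

lemma clog_le_log_succ {l : ℕ} (hl : 2 ≤ l) : Nat.clog 2 l ≤ Nat.log 2 l + 1 := by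
  have h := Nat.pow_pred_clog_lt_self one_lt_two (by omega : 1 < l)
  have h2 : Nat.clog 2 l - 1 ≤ Nat.log 2 l :=
    (Nat.le_log_iff_pow_le one_lt_two (by omega)).mpr h.le
  omega

lemma f_tendsto :
    Tendsto (fun l : ℕ => (2 * (Nat.clog 2 l + 1) : ℝ) / l) atTop (nhds 0) := by
  apply squeeze_zero'
  · filter_upwards [eventually_ge_atTop 1] with l hl
    positivity
  · filter_upwards [eventually_ge_atTop 16] with l hl
    set k := Nat.log 2 l with hk
    have hk4 : 4 ≤ k := by
      rw [hk]
      have : (2:ℕ)^4 ≤ l := by norm_num; omega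
      exact (Nat.le_log_iff_pow_le one_lt_two (by omega)).mpr this
    have hnum : (2 * (Nat.clog 2 l + 1) : ℝ) ≤ 3 * k := by
      have h1 : Nat.clog 2 l ≤ k + 1 := clog_le_log_succ (by omega)
      have : 2 * (Nat.clog 2 l + 1) ≤ 3 * k := by omega
      exact_mod_cast this
    have hden : (k:ℝ)^2 ≤ l := by
      have h1 : 2^k ≤ l := Nat.pow_log_le_self 2 (by omega)
      have := sq_le_two_pow hk4
      exact_mod_cast le_trans this h1
    have hk0 : (0:ℝ) < k := by positivity
    calc (2 * (Nat.clog 2 l + 1) : ℝ) / l ≤ (3 * k) / (k^2) := by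
          apply div_le_div₀ (by positivity) hnum (by positivity) hden
      _ = 3 / k := by
          rw [pow_two, mul_comm (k:ℝ) k]
          rw [mul_div_mul_right _ _ hk0.ne']
  · exact (tendsto_const_div_atTop_nhds_zero_nat 3).comp log_tendsto

lemma ratio_one (m : ℕ) : wB (2^(2^m) - 1) / wA (2^(2^m) - 1) = 1 := by
  have h1 : 1 ≤ 2^(2^m) := Nat.one_le_two_pow
  have he : 2^(2^m) - 1 + 1 = 2^(2^m) := by omega
  unfold wA wB
  rw [he, Nat.log_pow one_lt_two, Nat.clog_pow 2 m one_lt_two]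
  exact div_self (by positivity)

/-- There exist Waterman sequences `A`, `B` with `B` proper such that the
partial sums of `B` are `o` of those of `A`, while `bₙ/aₙ` does not tend to `0`. -/
theorem stmt5 :
    ∃ a b : ℕ → ℝ, IsWaterman a ∧ IsProperWaterman b ∧
      PartialSumsLittleO a b ∧ ¬ Tendsto (fun n => b n / a n) atTop (nhds 0) := by
  refine ⟨wA, wB, ⟨wA_anti, wA_pos, ?_⟩,
    ⟨⟨wB_anti, wB_pos, wB_not_summable⟩, wB_tendsto⟩, ?_, ?_⟩
  · intro hs
    exact wB_not_summable
      (Summable.of_nonneg_of_le (fun n => (wB_pos n).le) wB_le_wA hs)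
  · unfold PartialSumsLittleO
    apply squeeze_zero'
    · filter_upwards with n
      exact div_nonneg (Finset.sum_nonneg fun k _ => (wB_pos k).le)
        (Finset.sum_nonneg fun k _ => (wA_pos k).le)
    · filter_upwards [eventually_ge_atTop 2] with n hn
      have hl : 1 ≤ Nat.log 2 n :=
        (Nat.le_log_iff_pow_le one_lt_two (by omega)).mpr (by simpa using hn)
      calc (∑ k ∈ Finset.range n, wB k) / (∑ k ∈ Finset.range n, wA k)
          ≤ (2 * (Nat.clog 2 (Nat.log 2 n) + 1) : ℝ) / (Nat.log 2 n) := by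
            apply div_le_div₀ (by positivity) (Tb_le n (by omega))
              (by exact_mod_cast hl) (Ta_ge n (by omega))
        _ = ((fun l : ℕ => (2 * (Nat.clog 2 l + 1) : ℝ) / l) ∘ Nat.log 2) n := rfl
    · exact f_tendsto.comp log_tendsto
  · intro h
    obtain ⟨N, hN⟩ := (Metric.tendsto_atTop.mp h) (1/2) (by norm_num)
    have hn : N ≤ 2^(2^N) - 1 := by
      have h1 : N < 2^N := Nat.lt_two_pow_self
      have h2 : 2^N ≤ 2^(2^N) := Nat.pow_le_pow_right (by norm_num) h1.le
      omega
    have := hN _ hn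
    rw [ratio_one, dist_zero_right] at this
    norm_num at this
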